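/- Let (w_l)_{l ≥ 1} and (w̄_l)_{l ≥ 1} be weight sequences with w_l ≥ 1, w̄_l ≥ 1, and l ↦ w_l/w̄_l nondecreasing with w_l/w̄_l → ∞. For J ≥ 1 let π_J : M₀(w) → M₀(w) be the projection setting to 0 all coordinates x_{l,k} with l > J. Let (Ω, 𝔽, P) be a probability space, let (μ_n) be a sequence of Markov kernels from Ω to the Borel probability measures on M₀(w), and let ν be a Borel probability measure on M₀(w) with ∫ ‖x‖_{M(w̄)} dν(x) < ∞. Assume: (i) for every fixed J ≥ 1, the real random variables ω ↦ β( μ_n(ω) ∘ π_J^{−1}, ν ∘ π_J^{−1} ) converge to 0 in P-probability as n → ∞; and (ii) the random variables ω ↦ ∫ ‖x‖_{M(w̄)} d(μ_n(ω))(x) are uniformly bounded in probability, i.e., lim_{K → ∞} sup_n P( ∫ ‖x‖_{M(w̄)} dμ_n > K ) = 0. Then β( μ_n, ν ) → 0 in P-probability as n → ∞. -/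

import Mathlib

open MeasureTheory ProbabilityTheory Filter

/-- The index set `{(l,k) : l ≥ 1, 0 ≤ k < 2^l}` of the multiscale space (it carries the
discrete topology, as a subtype of `ℕ × ℕ`). -/
abbrev Idx : Type := {q : ℕ × ℕ // 1 ≤ q.1 ∧ q.2 < 2 ^ q.1}

/-- The multiscale space `M₀(w)`, realized (isometrically) as the space `c₀(Idx)` of
double sequences vanishing at infinity: an element `y` represents the multiscale sequence
`x` with coordinates `x_{l,k} = w l * y ⟨(l,k),_⟩`, so that
`‖x‖_{M(w)} = sup_l w_l⁻¹ max_k |x_{l,k}| = ‖y‖_∞`. Borel σ-algebra. -/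
noncomputable instance : MeasurableSpace (ZeroAtInftyContinuousMap Idx ℝ) := borel _
instance : BorelSpace (ZeroAtInftyContinuousMap Idx ℝ) := ⟨rfl⟩

/-- The bounded-Lipschitz distance between two Borel probability measures on `M₀(w)`:
`β(μ, ν) = sup { |∫ F dμ − ∫ F dν| : sup|F| + Lip(F) ≤ 1 }`. -/
noncomputable def blDist (μ ν : Measure (ZeroAtInftyContinuousMap Idx ℝ)) : ℝ :=
  sSup {r : ℝ | ∃ (F : ZeroAtInftyContinuousMap Idx ℝ → ℝ) (a : ℝ) (L : NNReal),
    a + (L : ℝ) ≤ 1 ∧ (∀ y, |F y| ≤ a) ∧ LipschitzWith L F ∧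
    r = |(∫ y, F y ∂μ) - ∫ y, F y ∂ν|}

/-- The `M(w̄)`-norm (possibly infinite) of an element of `M₀(w)`, namely
`sup_{l ≥ 1} w̄_l⁻¹ max_k |x_{l,k}|` where `x_{l,k} = w l * y ⟨(l,k),_⟩`. -/
noncomputable def normWbar (w wbar : ℕ → ℝ) (y : ZeroAtInftyContinuousMap Idx ℝ) : ENNReal :=
  ⨆ q : Idx, ENNReal.ofReal (|w q.1.1 * y q| / wbar q.1.1)

section Aux

/-- The set whose supremum defines `blDist`. -/
def blSet (μ ν : Measure (ZeroAtInftyContinuousMap Idx ℝ)) : Set ℝ :=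
  {r : ℝ | ∃ (F : ZeroAtInftyContinuousMap Idx ℝ → ℝ) (a : ℝ) (L : NNReal),
    a + (L : ℝ) ≤ 1 ∧ (∀ y, |F y| ≤ a) ∧ LipschitzWith L F ∧
    r = |(∫ y, F y ∂μ) - ∫ y, F y ∂ν|}

lemma blDist_eq_sSup (μ ν : Measure (ZeroAtInftyContinuousMap Idx ℝ)) :
    blDist μ ν = sSup (blSet μ ν) := rfl

lemma zero_mem_blSet (μ ν : Measure (ZeroAtInftyContinuousMap Idx ℝ)) :
    (0 : ℝ) ∈ blSet μ ν := by
  refine ⟨fun _ => 0, 0, 0, by norm_num, fun y => by simp, ?_, by simp⟩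
  simpa using LipschitzWith.const (0 : ℝ)

lemma blSet_bddAbove (μ ν : Measure (ZeroAtInftyContinuousMap Idx ℝ))
    [IsProbabilityMeasure μ] [IsProbabilityMeasure ν] : BddAbove (blSet μ ν) := by
  refine ⟨2, ?_⟩
  rintro r ⟨F, a, L, hal, hFa, hL, rfl⟩
  have hbd : ∀ (σ : Measure (ZeroAtInftyContinuousMap Idx ℝ)) [IsProbabilityMeasure σ],
      |∫ y, F y ∂σ| ≤ a := by
    intro σ _
    have := MeasureTheory.norm_integral_le_of_norm_le_const
      (μ := σ) (f := F) (C := a) (Filter.Eventually.of_forall fun y => by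
        simpa [Real.norm_eq_abs] using hFa y)
    simpa [Real.norm_eq_abs] using this
  have h1 := hbd μ
  have h2 := hbd ν
  have hL0 : (0 : ℝ) ≤ (L : ℝ) := L.2
  calc |(∫ y, F y ∂μ) - ∫ y, F y ∂ν| ≤ |∫ y, F y ∂μ| + |∫ y, F y ∂ν| := abs_sub _ _
    _ ≤ a + a := add_le_add h1 h2
    _ ≤ 2 := by linarith

lemma pi_lipschitz (π : ℕ → ZeroAtInftyContinuousMap Idx ℝ → ZeroAtInftyContinuousMap Idx ℝ)
    (hπ : ∀ (J : ℕ) (y : ZeroAtInftyContinuousMap Idx ℝ) (q : Idx),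
      (π J y) q = if q.1.1 ≤ J then y q else 0) (J : ℕ) :
    LipschitzWith 1 (π J) := by
  refine LipschitzWith.of_dist_le_mul fun y y' => ?_
  rw [NNReal.coe_one, one_mul, ← ZeroAtInftyContinuousMap.dist_toBCF_eq_dist]
  refine (BoundedContinuousFunction.dist_le dist_nonneg).mpr fun q => ?_
  show dist ((π J y) q) ((π J y') q) ≤ dist y y'
  rw [hπ J y q, hπ J y' q]
  by_cases h : q.1.1 ≤ J
  · simp only [h, if_true]
    have : dist ((y.toBCF) q) ((y'.toBCF) q) ≤ dist y.toBCF y'.toBCF :=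
      BoundedContinuousFunction.dist_coe_le_dist q
    simpa [ZeroAtInftyContinuousMap.dist_toBCF_eq_dist] using this
  · simpa [h] using dist_nonneg

lemma coord_le_normWbar (w wbar : ℕ → ℝ) (y : ZeroAtInftyContinuousMap Idx ℝ) (q : Idx) :
    ENNReal.ofReal (|w q.1.1 * y q| / wbar q.1.1) ≤ normWbar w wbar y :=
  le_iSup (fun q : Idx => ENNReal.ofReal (|w q.1.1 * y q| / wbar q.1.1)) q

/-- Key coordinatewise estimate: the distance from `y` to its projection is controlled by
`(w̄_{J+1}/w_{J+1}) · ‖y‖_{M(w̄)}`. -/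
lemma dist_pi_le (w wbar : ℕ → ℝ) (hw1 : ∀ l, 1 ≤ w l) (hwbar1 : ∀ l, 1 ≤ wbar l)
    (hmono : ∀ l m : ℕ, 1 ≤ l → l ≤ m → w l / wbar l ≤ w m / wbar m)
    (π : ℕ → ZeroAtInftyContinuousMap Idx ℝ → ZeroAtInftyContinuousMap Idx ℝ)
    (hπ : ∀ (J : ℕ) (y : ZeroAtInftyContinuousMap Idx ℝ) (q : Idx),
      (π J y) q = if q.1.1 ≤ J then y q else 0)
    (J : ℕ) (y : ZeroAtInftyContinuousMap Idx ℝ) :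
    ENNReal.ofReal (dist y (π J y)) ≤
      ENNReal.ofReal (wbar (J + 1) / w (J + 1)) * normWbar w wbar y := by
  set cJ : ℝ := wbar (J + 1) / w (J + 1) with hcJdef
  have hwpos : ∀ l, (0 : ℝ) < w l := fun l => lt_of_lt_of_le one_pos (hw1 l)
  have hwbpos : ∀ l, (0 : ℝ) < wbar l := fun l => lt_of_lt_of_le one_pos (hwbar1 l)
  have hcJpos : 0 < cJ := div_pos (hwbpos _) (hwpos _)
  rcases eq_or_ne (normWbar w wbar y) ⊤ with htop | hfin
  · rw [htop, ENNReal.mul_top (by simpa using (ENNReal.ofReal_pos.mpr hcJpos).ne')]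
    exact le_top
  · set N : ℝ := (normWbar w wbar y).toReal with hNdef
    have hN0 : 0 ≤ N := ENNReal.toReal_nonneg
    have hC0 : 0 ≤ cJ * N := mul_nonneg hcJpos.le hN0
    have hdist : dist y (π J y) ≤ cJ * N := by
      rw [← ZeroAtInftyContinuousMap.dist_toBCF_eq_dist]
      refine (BoundedContinuousFunction.dist_le hC0).mpr fun q => ?_
      show dist (y q) ((π J y) q) ≤ cJ * N
      rw [hπ J y q]
      by_cases h : q.1.1 ≤ J
      · simpa [h] using hC0
      · simp only [h, if_false]
        set l : ℕ := q.1.1 with hl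
        have hJl : J + 1 ≤ l := by omega
        -- the coordinate bound from normWbar
        have hcoord : |w l * y q| / wbar l ≤ N := by
          have := coord_le_normWbar w wbar y q
          rw [← hl] at this
          have h2 : ENNReal.ofReal (|w l * y q| / wbar l) ≤ ENNReal.ofReal N := by
            rw [hNdef, ENNReal.ofReal_toReal hfin]; exact this
          exact (ENNReal.ofReal_le_ofReal_iff hN0).mp h2
        -- the weight-ratio bound
        have hratio : wbar l / w l ≤ cJ := by
          have h1 := hmono (J + 1) l (by omega) hJl
          have h2 : 1 / (w l / wbar l) ≤ 1 / (w (J + 1) / wbar (J + 1)) :=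
            one_div_le_one_div_of_le (div_pos (hwpos _) (hwbpos _)) h1
          rwa [one_div_div, one_div_div] at h2
        have hy : |y q| = (wbar l / w l) * (|w l * y q| / wbar l) := by
          rw [abs_mul, abs_of_pos (hwpos l)]
          field_simp
          rw [eq_div_iff (mul_pos (hwbpos l) (hwpos l)).ne']
          ring
        rw [show dist (y q) (0:ℝ) = |y q| from by rw [Real.dist_eq, sub_zero], hy]
        exact mul_le_mul hratio hcoord (div_nonneg (abs_nonneg _) (hwbpos l).le) hcJpos.le
    calc ENNReal.ofReal (dist y (π J y)) ≤ ENNReal.ofReal (cJ * N) :=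
          ENNReal.ofReal_le_ofReal hdist
      _ = ENNReal.ofReal cJ * ENNReal.ofReal N := ENNReal.ofReal_mul hcJpos.le
      _ = ENNReal.ofReal cJ * normWbar w wbar y := by
          rw [hNdef, ENNReal.ofReal_toReal hfin]

/-- The key deterministic estimate: the bounded-Lipschitz distance is controlled by that of
the level-`J` projections plus the tail masses. -/
lemma key_estimate (w wbar : ℕ → ℝ) (hw1 : ∀ l, 1 ≤ w l) (hwbar1 : ∀ l, 1 ≤ wbar l)
    (hmono : ∀ l m : ℕ, 1 ≤ l → l ≤ m → w l / wbar l ≤ w m / wbar m)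
    (π : ℕ → ZeroAtInftyContinuousMap Idx ℝ → ZeroAtInftyContinuousMap Idx ℝ)
    (hπ : ∀ (J : ℕ) (y : ZeroAtInftyContinuousMap Idx ℝ) (q : Idx),
      (π J y) q = if q.1.1 ≤ J then y q else 0)
    (J : ℕ) (μ ν : Measure (ZeroAtInftyContinuousMap Idx ℝ))
    [IsProbabilityMeasure μ] [IsProbabilityMeasure ν]
    (K : ℝ) (hK : 0 ≤ K)
    (hμK : (∫⁻ y, normWbar w wbar y ∂μ) ≤ ENNReal.ofReal K)
    (hνfin : (∫⁻ y, normWbar w wbar y ∂ν) ≠ ⊤) :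
    blDist μ ν ≤ blDist (μ.map (π J)) (ν.map (π J))
      + (wbar (J + 1) / w (J + 1)) * K
      + (wbar (J + 1) / w (J + 1)) * (∫⁻ y, normWbar w wbar y ∂ν).toReal := by
  set cJ : ℝ := wbar (J + 1) / w (J + 1) with hcJdef
  have hwpos : ∀ l, (0 : ℝ) < w l := fun l => lt_of_lt_of_le one_pos (hw1 l)
  have hwbpos : ∀ l, (0 : ℝ) < wbar l := fun l => lt_of_lt_of_le one_pos (hwbar1 l)
  have hcJ : 0 < cJ := div_pos (hwbpos _) (hwpos _)
  have hπc : Continuous (π J) := (pi_lipschitz π hπ J).continuous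
  have hπm : Measurable (π J) := hπc.measurable
  haveI : IsProbabilityMeasure (μ.map (π J)) := Measure.isProbabilityMeasure_map hπm.aemeasurable
  haveI : IsProbabilityMeasure (ν.map (π J)) := Measure.isProbabilityMeasure_map hπm.aemeasurable
  set Iν : ℝ := (∫⁻ y, normWbar w wbar y ∂ν).toReal with hIν
  rw [blDist_eq_sSup]
  refine csSup_le ⟨0, zero_mem_blSet μ ν⟩ ?_
  rintro r ⟨F, a, L, hal, hFa, hL, rfl⟩
  have ha0 : 0 ≤ a := (abs_nonneg _).trans (hFa 0)
  have hL1 : (L : ℝ) ≤ 1 := by linarith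
  have hFc : Continuous F := hL.continuous
  -- pointwise bound
  have hpt : ∀ y, ENNReal.ofReal |F y - F (π J y)| ≤
      ENNReal.ofReal cJ * normWbar w wbar y := by
    intro y
    have h1 : |F y - F (π J y)| ≤ dist y (π J y) := by
      have h2 := hL.dist_le_mul y (π J y)
      rw [Real.dist_eq] at h2
      calc |F y - F (π J y)| ≤ (L : ℝ) * dist y (π J y) := h2
        _ ≤ 1 * dist y (π J y) := mul_le_mul_of_nonneg_right hL1 dist_nonneg
        _ = dist y (π J y) := one_mul _
    exact le_trans (ENNReal.ofReal_le_ofReal h1)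
      (dist_pi_le w wbar hw1 hwbar1 hmono π hπ J y)
  -- generic tail bound
  have hdiff : ∀ (σ : Measure (ZeroAtInftyContinuousMap Idx ℝ)), IsProbabilityMeasure σ →
      ∀ B : ℝ, 0 ≤ B →
      ENNReal.ofReal cJ * (∫⁻ y, normWbar w wbar y ∂σ) ≤ ENNReal.ofReal B →
      |(∫ y, F y ∂σ) - ∫ y, F (π J y) ∂σ| ≤ B := by
    intro σ hσ B hB0 hB
    haveI := hσ
    have hint1 : Integrable F σ :=
      Integrable.mono' (integrable_const a) hFc.aestronglyMeasurable
        (Filter.Eventually.of_forall fun y => by simpa [Real.norm_eq_abs] using hFa y)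
    have hint2 : Integrable (fun y => F (π J y)) σ :=
      Integrable.mono' (integrable_const a) (hFc.comp hπc).aestronglyMeasurable
        (Filter.Eventually.of_forall fun y => by simpa [Real.norm_eq_abs] using hFa (π J y))
    rw [← integral_sub hint1 hint2]
    have h2 : |∫ y, (F y - F (π J y)) ∂σ| ≤ ∫ y, |F y - F (π J y)| ∂σ := by
      simpa [Real.norm_eq_abs] using
        norm_integral_le_integral_norm (μ := σ) (fun y => F y - F (π J y))
    refine h2.trans ?_
    have h3 : ∫ y, |F y - F (π J y)| ∂σ =
        (∫⁻ y, ENNReal.ofReal |F y - F (π J y)| ∂σ).toReal :=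
      integral_eq_lintegral_of_nonneg_ae (Filter.Eventually.of_forall fun y => abs_nonneg _)
        ((hFc.sub (hFc.comp hπc)).abs.aestronglyMeasurable)
    rw [h3]
    refine ENNReal.toReal_le_of_le_ofReal hB0 ?_
    calc (∫⁻ y, ENNReal.ofReal |F y - F (π J y)| ∂σ)
        ≤ ∫⁻ y, ENNReal.ofReal cJ * normWbar w wbar y ∂σ := lintegral_mono hpt
      _ = ENNReal.ofReal cJ * ∫⁻ y, normWbar w wbar y ∂σ :=
          lintegral_const_mul' _ _ ENNReal.ofReal_ne_top
      _ ≤ ENNReal.ofReal B := hB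
  have hμbound : |(∫ y, F y ∂μ) - ∫ y, F (π J y) ∂μ| ≤ cJ * K := by
    refine hdiff μ inferInstance (cJ * K) (mul_nonneg hcJ.le hK) ?_
    calc ENNReal.ofReal cJ * (∫⁻ y, normWbar w wbar y ∂μ)
        ≤ ENNReal.ofReal cJ * ENNReal.ofReal K := mul_le_mul_right hμK _
      _ = ENNReal.ofReal (cJ * K) := (ENNReal.ofReal_mul hcJ.le).symm
  have hνbound : |(∫ y, F y ∂ν) - ∫ y, F (π J y) ∂ν| ≤ cJ * Iν := by
    refine hdiff ν inferInstance (cJ * Iν) (mul_nonneg hcJ.le ENNReal.toReal_nonneg) ?_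
    rw [ENNReal.ofReal_mul hcJ.le, hIν, ENNReal.ofReal_toReal hνfin]
  have hmapμ : ∫ y, F (π J y) ∂μ = ∫ y, F y ∂(μ.map (π J)) :=
    (integral_map hπm.aemeasurable hFc.aestronglyMeasurable).symm
  have hmapν : ∫ y, F (π J y) ∂ν = ∫ y, F y ∂(ν.map (π J)) :=
    (integral_map hπm.aemeasurable hFc.aestronglyMeasurable).symm
  have hmid : |(∫ y, F y ∂(μ.map (π J))) - ∫ y, F y ∂(ν.map (π J))| ≤
      blDist (μ.map (π J)) (ν.map (π J)) :=
    le_csSup (blSet_bddAbove _ _) ⟨F, a, L, hal, hFa, hL, rfl⟩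
  rw [← hmapμ, ← hmapν] at hmid
  have t1 := abs_sub_le (∫ y, F y ∂μ) (∫ y, F (π J y) ∂μ) (∫ y, F y ∂ν)
  have t2 := abs_sub_le (∫ y, F (π J y) ∂μ) (∫ y, F (π J y) ∂ν) (∫ y, F y ∂ν)
  have t3 : |(∫ y, F (π J y) ∂ν) - ∫ y, F y ∂ν| = |(∫ y, F y ∂ν) - ∫ y, F (π J y) ∂ν| :=
    abs_sub_comm _ _
  linarith

end Aux

/-- Proposition 4, the tightness criterion. Let `w, w̄` be weights with
`w_l, w̄_l ≥ 1` and `l ↦ w_l/w̄_l` nondecreasing and tending to `∞`. Let `π J` be the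
projection of `M₀(w)` killing all coordinates at levels `l > J`, let `(κ n)` be Markov
kernels from `Ω` to `M₀(w)` and `ν` a Borel probability measure on `M₀(w)` with
`∫ ‖x‖_{M(w̄)} dν < ∞`. If (i) the finite-dimensional projections of `κ n` converge to
those of `ν` in the bounded-Lipschitz distance, in `P`-probability, and (ii) the random
variables `∫ ‖x‖_{M(w̄)} d(κ n ω)` are uniformly bounded in probability, then
`β(κ n ·, ν) → 0` in `P`-probability. -/
theorem tightness_criterion_M0
    (w wbar : ℕ → ℝ) (hw1 : ∀ l, 1 ≤ w l) (hwbar1 : ∀ l, 1 ≤ wbar l)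
    (hmono : ∀ l m : ℕ, 1 ≤ l → l ≤ m → w l / wbar l ≤ w m / wbar m)
    (hinf : Tendsto (fun l : ℕ => w l / wbar l) atTop atTop)
    (π : ℕ → ZeroAtInftyContinuousMap Idx ℝ → ZeroAtInftyContinuousMap Idx ℝ)
    (hπ : ∀ (J : ℕ) (y : ZeroAtInftyContinuousMap Idx ℝ) (q : Idx),
      (π J y) q = if q.1.1 ≤ J then y q else 0)
    {Ω : Type*} [MeasurableSpace Ω] (P : Measure Ω) [IsProbabilityMeasure P]
    (κ : ℕ → Kernel Ω (ZeroAtInftyContinuousMap Idx ℝ))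
    (hκ : ∀ n, IsMarkovKernel (κ n))
    (ν : Measure (ZeroAtInftyContinuousMap Idx ℝ)) (hν : IsProbabilityMeasure ν)
    (hνint : (∫⁻ y, normWbar w wbar y ∂ν) < ⊤)
    (hfidi : ∀ J : ℕ, 1 ≤ J → ∀ ε : ℝ, 0 < ε →
      Tendsto (fun n : ℕ =>
          P {ω | ε < blDist (Measure.map (π J) ((κ n) ω)) (Measure.map (π J) ν)})
        atTop (nhds 0))
    (hbdd : ∀ ε : ℝ, 0 < ε → ∃ K : ℝ, ∀ n : ℕ,
      P {ω | ENNReal.ofReal K < ∫⁻ y, normWbar w wbar y ∂((κ n) ω)} ≤ ENNReal.ofReal ε) :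
    ∀ ε : ℝ, 0 < ε →
      Tendsto (fun n : ℕ => P {ω | ε < blDist ((κ n) ω) ν}) atTop (nhds 0) := by
  intro ε hε
  haveI := hν
  rw [ENNReal.tendsto_nhds_zero]
  intro εE hεE
  -- a real δ > 0 with ofReal δ ≤ εE
  set δ : ℝ := (min εE 1).toReal with hδdef
  have hmin_ne : min εE 1 ≠ ⊤ := ne_top_of_le_ne_top ENNReal.one_ne_top (min_le_right _ _)
  have hδpos : 0 < δ := ENNReal.toReal_pos (lt_min hεE one_pos).ne' hmin_ne
  have hδle : ENNReal.ofReal δ ≤ εE := by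
    rw [hδdef, ENNReal.ofReal_toReal hmin_ne]; exact min_le_left _ _
  obtain ⟨K₀, hK₀⟩ := hbdd (δ / 2) (by linarith)
  set K : ℝ := max K₀ 1 with hKdef
  have hK1 : (1 : ℝ) ≤ K := le_max_right _ _
  have hKpos : (0 : ℝ) ≤ K := by linarith
  have hKmono : ∀ n, P {ω | ENNReal.ofReal K < ∫⁻ y, normWbar w wbar y ∂((κ n) ω)} ≤
      ENNReal.ofReal (δ / 2) := by
    intro n
    refine le_trans (measure_mono fun ω hω => ?_) (hK₀ n)
    exact lt_of_le_of_lt (ENNReal.ofReal_le_ofReal (le_max_left _ _)) hω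
  set Iν : ℝ := (∫⁻ y, normWbar w wbar y ∂ν).toReal with hIνdef
  have hIν0 : 0 ≤ Iν := ENNReal.toReal_nonneg
  have hmaxpos : (0 : ℝ) < max K Iν := lt_of_lt_of_le one_pos (le_trans hK1 (le_max_left _ _))
  set M : ℝ := 4 * max K Iν / ε with hMdef
  have hMpos : 0 < M := div_pos (by linarith) hε
  have hev : ∀ᶠ l in atTop, M ≤ w l / wbar l := hinf.eventually_ge_atTop M
  obtain ⟨l₀, hl₀⟩ := eventually_atTop.mp hev
  set J : ℕ := max 1 l₀ with hJdef
  have hJ1 : 1 ≤ J := le_max_left _ _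
  have hwJ : M ≤ w (J + 1) / wbar (J + 1) := hl₀ (J + 1) (by omega)
  set cJ : ℝ := wbar (J + 1) / w (J + 1) with hcJdef
  have hwpos : ∀ l, (0 : ℝ) < w l := fun l => lt_of_lt_of_le one_pos (hw1 l)
  have hwbpos : ∀ l, (0 : ℝ) < wbar l := fun l => lt_of_lt_of_le one_pos (hwbar1 l)
  have hcJ0 : 0 < cJ := div_pos (hwbpos _) (hwpos _)
  have hcJle : cJ ≤ 1 / M := by
    have h := one_div_le_one_div_of_le hMpos hwJ
    rwa [one_div_div] at h
  have hterm : ∀ x : ℝ, x ≤ max K Iν → 0 ≤ x → cJ * x ≤ ε / 4 := by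
    intro x hx hx0
    have h1 : cJ * x ≤ (1 / M) * max K Iν :=
      mul_le_mul hcJle hx hx0 (by positivity)
    refine h1.trans (le_of_eq ?_)
    rw [hMdef]
    field_simp
  have hfid := hfidi J hJ1 (ε / 2) (by linarith)
  have hevent : ∀ᶠ n in atTop,
      P {ω | ε / 2 < blDist (Measure.map (π J) ((κ n) ω)) (Measure.map (π J) ν)} ≤
        ENNReal.ofReal (δ / 2) :=
    (hfid.eventually_lt_const (ENNReal.ofReal_pos.mpr (by linarith))).mono fun n hn => hn.le
  filter_upwards [hevent] with n hn
  haveI := hκ n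
  have hsub : {ω | ε < blDist ((κ n) ω) ν} ⊆
      {ω | ε / 2 < blDist (Measure.map (π J) ((κ n) ω)) (Measure.map (π J) ν)} ∪
      {ω | ENNReal.ofReal K < ∫⁻ y, normWbar w wbar y ∂((κ n) ω)} := by
    intro ω hω
    by_contra hc
    rw [Set.mem_union] at hc
    push_neg at hc
    obtain ⟨h1, h2⟩ := hc
    simp only [Set.mem_setOf_eq, not_lt] at h1 h2
    have hkey := key_estimate w wbar hw1 hwbar1 hmono π hπ J ((κ n) ω) ν K hKpos h2 hνint.ne
    have hfin : blDist ((κ n) ω) ν ≤ ε / 2 + ε / 4 + ε / 4 := by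
      refine hkey.trans ?_
      have hb1 : cJ * K ≤ ε / 4 := hterm K (le_max_left _ _) hKpos
      have hb2 : cJ * Iν ≤ ε / 4 := hterm Iν (le_max_right _ _) hIν0
      rw [← hcJdef, ← hIνdef]
      linarith
    have hω' : ε < blDist ((κ n) ω) ν := hω
    linarith
  calc P {ω | ε < blDist ((κ n) ω) ν}
      ≤ P ({ω | ε / 2 < blDist (Measure.map (π J) ((κ n) ω)) (Measure.map (π J) ν)} ∪
          {ω | ENNReal.ofReal K < ∫⁻ y, normWbar w wbar y ∂((κ n) ω)}) :=
        measure_mono hsub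
    _ ≤ P {ω | ε / 2 < blDist (Measure.map (π J) ((κ n) ω)) (Measure.map (π J) ν)} +
          P {ω | ENNReal.ofReal K < ∫⁻ y, normWbar w wbar y ∂((κ n) ω)} :=
        measure_union_le _ _
    _ ≤ ENNReal.ofReal (δ / 2) + ENNReal.ofReal (δ / 2) := add_le_add hn (hKmono n)
    _ = ENNReal.ofReal δ := by
        rw [← ENNReal.ofReal_add (by linarith) (by linarith)]
        norm_num
    _ ≤ εE := hδle
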